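/- For a double factorization system (E, J, M) on a topos C, the following are equivalent: (i) (E, J, M) is cartesian, i.e. the classes E and J·E are stable under pullback and every morphism in M·J is a monomorphism; (ii) every morphism in M and every morphism in J is a monomorphism, and each of the three classes E, J, M is stable under pullback. -/

import Mathlib

open CategoryTheory CategoryTheory.Limits

universe v u v₂ u₂

namespace DFS

variable {C : Type u} [Category.{v} C]

/-- `f` is (left) orthogonal to `g`: every commutative square from `f` to `g`
admits a unique diagonal filler. -/
def Orth {A B X Y : C} (f : A ⟶ B) (g : X ⟶ Y) : Prop :=
  ∀ (u : A ⟶ X) (v : B ⟶ Y), u ≫ g = f ≫ v → ∃! h : B ⟶ X, f ≫ h = u ∧ h ≫ g = v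

/-- Mutual orthogonality of two classes of morphisms. -/
def ClassOrth (L R : MorphismProperty C) : Prop :=
  ∀ ⦃A B X Y : C⦄ (f : A ⟶ B) (g : X ⟶ Y), L f → R g → Orth f g

/-- The class `R·L` of composites `e ≫ m` with `e ∈ L` and `m ∈ R`. -/
def Comp (R L : MorphismProperty C) : MorphismProperty C :=
  fun X Y f => ∃ (Z : C) (e : X ⟶ Z) (m : Z ⟶ Y), L e ∧ R m ∧ e ≫ m = f

/-- An object `X` is `L`-local if precomposition with every member of `L` is a
bijection of hom-sets into `X`. -/
def IsLocal (L : MorphismProperty C) (X : C) : Prop :=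
  ∀ ⦃A B : C⦄ (m : A ⟶ B), L m → Function.Bijective (fun g : B ⟶ X => m ≫ g)

/-- An object `X` is `L`-separating if precomposition with every member of `L` is an
injection of hom-sets into `X`. -/
def IsSeparating (L : MorphismProperty C) (X : C) : Prop :=
  ∀ ⦃A B : C⦄ (m : A ⟶ B), L m → Function.Injective (fun g : B ⟶ X => m ≫ g)

/-- A double (orthogonal) factorization system. -/
structure IsDFS (E J M : MorphismProperty C) : Prop where
  postcomp_iso_E : ∀ ⦃A B B' : C⦄ (e : A ⟶ B) (i : B ⟶ B'), IsIso i → E e → E (e ≫ i)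
  comp_iso_J : ∀ ⦃A' A B B' : C⦄ (i : A' ⟶ A) (j : A ⟶ B) (i' : B ⟶ B'),
      IsIso i → IsIso i' → J j → J (i ≫ j ≫ i')
  precomp_iso_M : ∀ ⦃A' A B : C⦄ (i : A' ⟶ A) (m : A ⟶ B), IsIso i → M m → M (i ≫ m)
  fac : ∀ ⦃X Y : C⦄ (f : X ⟶ Y), ∃ (A B : C) (e : X ⟶ A) (j : A ⟶ B) (m : B ⟶ Y),
      E e ∧ J j ∧ M m ∧ e ≫ j ≫ m = f
  lift : ∀ ⦃A B B'' D D' F' : C⦄ (e : A ⟶ B) (j : B ⟶ B'') (j' : D ⟶ D') (m : D' ⟶ F')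
      (u : A ⟶ D) (v : B'' ⟶ F'), E e → J j → J j' → M m →
      e ≫ j ≫ v = u ≫ j' ≫ m →
      ∃! st : (B ⟶ D) × (B'' ⟶ D'),
        e ≫ st.1 = u ∧ st.1 ≫ j' = j ≫ st.2 ∧ st.2 ≫ m = v

/-- An (orthogonal) factorization system. -/
structure IsFS (L R : MorphismProperty C) : Prop where
  fac : ∀ ⦃X Y : C⦄ (f : X ⟶ Y), ∃ (Z : C) (e : X ⟶ Z) (m : Z ⟶ Y), L e ∧ R m ∧ e ≫ m = f
  left_iff : ∀ ⦃A B : C⦄ (f : A ⟶ B), L f ↔ ∀ ⦃X Y : C⦄ (g : X ⟶ Y), R g → Orth f g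
  right_iff : ∀ ⦃X Y : C⦄ (g : X ⟶ Y), R g ↔ ∀ ⦃A B : C⦄ (f : A ⟶ B), L f → Orth f g

/-- Stability of a class of morphisms under pullback. -/
def StableUnderPB (P : MorphismProperty C) : Prop :=
  ∀ ⦃A B A' B' : C⦄ (f : A ⟶ B) (g : B' ⟶ B) (f' : A' ⟶ B') (h : A' ⟶ A),
    IsPullback h f' f g → P f → P f'

/-- A left Quillen functor between categories equipped with dfs's: it maps
trivial cofibrations to trivial cofibrations and cofibrations to cofibrations. -/
def LeftQuillen {D : Type u₂} [Category.{v₂} D]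
    (EC JC : MorphismProperty C) (ED JD : MorphismProperty D) (F : C ⥤ D) : Prop :=
  (∀ ⦃A B : C⦄ (f : A ⟶ B), EC f → ED (F.map f)) ∧
  (∀ ⦃A B : C⦄ (f : A ⟶ B), Comp JC EC f → Comp JD ED (F.map f))

end DFS
namespace DFS

variable {C : Type u} [Category.{v} C]

section Topos

variable [HasTerminal C]

/-- `c : B ⟶ Ω` classifies the morphism `m : A ⟶ B` (relative to the truth arrow
`tr : ⊤ ⟶ Ω`) if the evident square is a pullback. -/
def Classifies (Ω : C) (tr : ⊤_ C ⟶ Ω) {A B : C} (m : A ⟶ B) (c : B ⟶ Ω) : Prop :=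
  IsPullback (terminal.from A) m tr c

/-- `(Ω, tr)` is a subobject classifier: every monomorphism has a unique
classifying morphism. -/
def IsClassifier (Ω : C) (tr : ⊤_ C ⟶ Ω) : Prop :=
  ∀ ⦃A B : C⦄ (m : A ⟶ B), Mono m → ∃! c : B ⟶ Ω, Classifies Ω tr m c

/-- `k : Ω ⟶ Ω` is a Lawvere–Tierney topology: `k ∘ true = true`, `k ∘ k = k` and
`k ∘ ∧ = ∧ ∘ (k × k)`, where `∧ = char(true × true)`. -/
def IsLT [HasBinaryProducts C] (Ω : C) (tr : ⊤_ C ⟶ Ω) (k : Ω ⟶ Ω) : Prop :=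
  tr ≫ k = tr ∧ k ≫ k = k ∧
    ∀ meet : Ω ⨯ Ω ⟶ Ω, Classifies Ω tr (prod.lift tr tr) meet →
      meet ≫ k = prod.map k k ≫ meet

/-- `m` is a `k`-dense monomorphism: its characteristic morphism `c` satisfies
`k ∘ c = true ∘ !`. -/
def IsDense (Ω : C) (tr : ⊤_ C ⟶ Ω) (k : Ω ⟶ Ω) {A B : C} (m : A ⟶ B) : Prop :=
  ∃ c : B ⟶ Ω, Classifies Ω tr m c ∧ c ≫ k = terminal.from B ≫ tr

/-- `m` is a `k`-closed monomorphism: its characteristic morphism `c` satisfies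
`k ∘ c = c`. -/
def IsClosed (Ω : C) (tr : ⊤_ C ⟶ Ω) (k : Ω ⟶ Ω) {A B : C} (m : A ⟶ B) : Prop :=
  ∃ c : B ⟶ Ω, Classifies Ω tr m c ∧ c ≫ k = c

/-- The class of `k`-dense monomorphisms. -/
def denseMonos (Ω : C) (tr : ⊤_ C ⟶ Ω) (k : Ω ⟶ Ω) : MorphismProperty C :=
  fun _ _ m => Mono m ∧ IsDense Ω tr k m

/-- The class of `k`-closed monomorphisms. -/
def closedMonos (Ω : C) (tr : ⊤_ C ⟶ Ω) (k : Ω ⟶ Ω) : MorphismProperty C :=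
  fun _ _ m => Mono m ∧ IsClosed Ω tr k m

/-- The class of epimorphisms. -/
def epis : MorphismProperty C := fun _ _ f => Epi f

/-- `X` is a `k`-sheaf: every hom into `X` extends uniquely along `k`-dense
monomorphisms. -/
def IsSheaf (Ω : C) (tr : ⊤_ C ⟶ Ω) (k : Ω ⟶ Ω) (X : C) : Prop :=
  ∀ ⦃A B : C⦄ (m : A ⟶ B), Mono m → IsDense Ω tr k m →
    Function.Bijective (fun g : B ⟶ X => m ≫ g)

/-- `X` is a `k`-separated object: every hom into `X` extends at most in one way along
`k`-dense monomorphisms. -/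
def IsSepObj (Ω : C) (tr : ⊤_ C ⟶ Ω) (k : Ω ⟶ Ω) (X : C) : Prop :=
  ∀ ⦃A B : C⦄ (m : A ⟶ B), Mono m → IsDense Ω tr k m →
    Function.Injective (fun g : B ⟶ X => m ≫ g)

/-- `n` is the `k`-closure of the monomorphism `m`: `n` is classified by
`k ∘ char m`. -/
def IsClosureOf (Ω : C) (tr : ⊤_ C ⟶ Ω) (k : Ω ⟶ Ω) {A A' B : C}
    (m : A ⟶ B) (n : A' ⟶ B) : Prop :=
  ∃ c : B ⟶ Ω, Classifies Ω tr m c ∧ Classifies Ω tr n (c ≫ k)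

/-- A dfs `(E, J, M)` is cartesian: `E` and `J·E` are stable under pullback and
every morphism of `M·J` is a monomorphism. -/
def IsCartesian (E J M : MorphismProperty C) : Prop :=
  StableUnderPB E ∧ StableUnderPB (Comp J E) ∧
    ∀ ⦃A B : C⦄ (f : A ⟶ B), Comp M J f → Mono f

end Topos

end DFS

namespace DFSAux

open DFS

variable {C : Type u} [Category.{v} C] {E J M : MorphismProperty C}

/-- In a dfs, every identity lies in all three classes. -/
lemma ids (h : IsDFS E J M) (A : C) : E (𝟙 A) ∧ J (𝟙 A) ∧ M (𝟙 A) := by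
  obtain ⟨P, Q, e, j, m, he, hj, hm, hfac⟩ := h.fac (𝟙 A)
  obtain ⟨st, ⟨h1, h2, h3⟩, huniq⟩ := h.lift e j j m e m he hj hj hm rfl
  have key : ∀ {Z : C} (w : A ⟶ Z), e ≫ j ≫ m ≫ w = w := by
    intro Z w
    rw [show e ≫ j ≫ m ≫ w = (e ≫ j ≫ m) ≫ w by simp only [Category.assoc], hfac,
      Category.id_comp]
  have hid : ((𝟙 P, 𝟙 Q) : (P ⟶ P) × (Q ⟶ Q)) = st :=
    huniq _ ⟨by simp, by simp, by simp⟩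
  have hjm : ((j ≫ m ≫ e, m ≫ e ≫ j) : (P ⟶ P) × (Q ⟶ Q)) = st := by
    refine huniq _ ⟨key e, by simp only [Category.assoc], ?_⟩
    show (m ≫ e ≫ j) ≫ m = m
    rw [Category.assoc, Category.assoc, show j ≫ m = j ≫ m from rfl]
    rw [show m ≫ e ≫ j ≫ m = m ≫ (e ≫ j ≫ m) by simp only [Category.assoc], hfac,
      Category.comp_id]
  have h4 : j ≫ m ≫ e = 𝟙 P := congrArg Prod.fst (hjm.trans hid.symm)
  have h5 : m ≫ e ≫ j = 𝟙 Q := congrArg Prod.snd (hjm.trans hid.symm)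
  have hfac' : (e ≫ j) ≫ m = 𝟙 A := by rw [Category.assoc]; exact hfac
  have iE : IsIso e := ⟨j ≫ m, hfac, by rw [Category.assoc]; exact h4⟩
  have iJ : IsIso j := ⟨m ≫ e, h4, by rw [Category.assoc]; exact h5⟩
  have iM : IsIso m := ⟨e ≫ j, h5, hfac'⟩
  refine ⟨?_, ?_, ?_⟩
  · have ijm : IsIso (j ≫ m) := ⟨e, by rw [Category.assoc]; exact h4, hfac⟩
    have := h.postcomp_iso_E e (j ≫ m) ijm he
    exact hfac ▸ this
  · have := h.comp_iso_J e j m iE iM hj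
    exact hfac ▸ this
  · have iej : IsIso (e ≫ j) := ⟨m, hfac', h5⟩
    have := h.precomp_iso_M (e ≫ j) m iej hm
    exact hfac' ▸ this

/-- `E` is left orthogonal to composites `j ≫ m` with `j ∈ J`, `m ∈ M`. -/
lemma orth_left (h : IsDFS E J M) {X B D D' F' : C} {e : X ⟶ B} {j : D ⟶ D'} {m : D' ⟶ F'}
    (he : E e) (hj : J j) (hm : M m) : Orth e (j ≫ m) := by
  intro u v huv
  obtain ⟨st, ⟨h1, h2, h3⟩, huniq⟩ := h.lift e (𝟙 B) j m u v he (ids h B).2.1 hj hm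
    (by rw [Category.id_comp]; exact huv.symm)
  refine ⟨st.1, ⟨h1, ?_⟩, ?_⟩
  · rw [← Category.assoc, h2, Category.id_comp]; exact h3
  · intro y hy
    have : (y, y ≫ j) = st := by
      refine huniq _ ⟨hy.1, (Category.id_comp _).symm, ?_⟩
      show (y ≫ j) ≫ m = v
      rw [Category.assoc]; exact hy.2
    exact congrArg Prod.fst this

/-- Composites `e ≫ j` with `e ∈ E`, `j ∈ J` are left orthogonal to `M`. -/
lemma orth_right (h : IsDFS E J M) {X B B'' D F : C} {e : X ⟶ B} {j : B ⟶ B''} {m : D ⟶ F}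
    (he : E e) (hj : J j) (hm : M m) : Orth (e ≫ j) m := by
  intro u v huv
  obtain ⟨st, ⟨h1, h2, h3⟩, huniq⟩ := h.lift e j (𝟙 D) m u v he hj (ids h D).2.1 hm
    (by rw [Category.id_comp, ← Category.assoc]; exact huv.symm)
  refine ⟨st.2, ⟨?_, h3⟩, ?_⟩
  · rw [Category.assoc, ← h2, Category.comp_id]; exact h1
  · intro y hy
    have : (j ≫ y, y) = st := by
      refine huniq _ ⟨?_, Category.comp_id _, hy.2⟩
      show e ≫ j ≫ y = u
      rw [← Category.assoc]; exact hy.1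
    exact congrArg Prod.snd this

/-- Right orthogonality is stable under pullback. -/
lemma orth_pb {X Y A B A' B' : C} {f : X ⟶ Y} {m : A ⟶ B} {g : B' ⟶ B} {m' : A' ⟶ B'}
    {hh : A' ⟶ A} (pb : IsPullback hh m' m g) (ho : Orth f m) : Orth f m' := by
  intro u v huv
  obtain ⟨d, ⟨hd1, hd2⟩, hduniq⟩ := ho (u ≫ hh) (v ≫ g)
    (by rw [Category.assoc, pb.w, ← Category.assoc, huv, Category.assoc])
  refine ⟨pb.lift d v hd2, ⟨?_, pb.lift_snd _ _ _⟩, ?_⟩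
  · refine pb.hom_ext ?_ ?_
    · rw [Category.assoc, pb.lift_fst, hd1]
    · rw [Category.assoc, pb.lift_snd, ← huv]
  · intro y hy
    have hy1 : f ≫ y ≫ hh = u ≫ hh := by rw [← Category.assoc, hy.1]
    have hy2 : (y ≫ hh) ≫ m = v ≫ g := by
      rw [Category.assoc, pb.w, ← Category.assoc, hy.2]
    have : y ≫ hh = d := hduniq _ ⟨hy1, hy2⟩
    refine pb.hom_ext ?_ ?_
    · rw [pb.lift_fst]; exact this
    · rw [pb.lift_snd]; exact hy.2

/-- A morphism right orthogonal to all of `J · E` belongs to `M`. -/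
lemma mem_M_of_orth (h : IsDFS E J M) {X Y : C} {f : X ⟶ Y}
    (ho : ∀ ⦃P Q R : C⦄ (e : P ⟶ Q) (j : Q ⟶ R), E e → J j → Orth (e ≫ j) f) : M f := by
  obtain ⟨A, B, e, j, m, he, hj, hm, hfac⟩ := h.fac f
  obtain ⟨d, ⟨hd1, hd2⟩, _⟩ := ho e j he hj (𝟙 X) m
    (by rw [Category.id_comp, ← hfac, Category.assoc])
  obtain ⟨dd, _, hdduniq⟩ := orth_right h he hj hm (e ≫ j) m rfl
  have e1 : 𝟙 B = dd := hdduniq _ ⟨Category.comp_id _, Category.id_comp _⟩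
  have e2 : d ≫ (e ≫ j) = dd := by
    refine hdduniq _ ⟨?_, ?_⟩
    · rw [← Category.assoc, hd1, Category.id_comp]
    · show (d ≫ e ≫ j) ≫ m = m
      rw [Category.assoc, Category.assoc, hfac]; exact hd2
  have hiso : IsIso (e ≫ j) := ⟨d, hd1, e2.trans e1.symm⟩
  have hMf := h.precomp_iso_M (e ≫ j) m hiso hm
  have heq : (e ≫ j) ≫ m = f := by rw [Category.assoc]; exact hfac
  exact heq ▸ hMf

/-- A morphism right orthogonal to all of `E` belongs to `M · J`. -/
lemma mem_MJ_of_orth (h : IsDFS E J M) {X Y : C} {f : X ⟶ Y}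
    (ho : ∀ ⦃P Q : C⦄ (e : P ⟶ Q), E e → Orth e f) : Comp M J f := by
  obtain ⟨A, B, e, j, m, he, hj, hm, hfac⟩ := h.fac f
  obtain ⟨d, ⟨hd1, hd2⟩, _⟩ := ho e he (𝟙 X) (j ≫ m) (by rw [Category.id_comp, ← hfac])
  obtain ⟨dd, _, hdduniq⟩ := orth_left h he hj hm e (j ≫ m) rfl
  have e1 : 𝟙 A = dd := hdduniq _ ⟨Category.comp_id _, Category.id_comp _⟩
  have e2 : d ≫ e = dd := by
    refine hdduniq _ ⟨?_, ?_⟩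
    · rw [← Category.assoc, hd1, Category.id_comp]
    · show (d ≫ e) ≫ j ≫ m = j ≫ m
      rw [Category.assoc, hfac]; exact hd2
  have hiso : IsIso e := ⟨d, hd1, e2.trans e1.symm⟩
  have hJej : J (e ≫ j) := by
    have := h.comp_iso_J e j (𝟙 B) hiso inferInstance hj
    simpa using this
  exact ⟨B, e ≫ j, m, hJej, hm, by rw [Category.assoc]; exact hfac⟩

end DFSAux


/-- For a dfs `(E, J, M)` on a topos `C` (finite limits, a subobject
classifier and exponentials), the following are equivalent: (i) the dfs is cartesian
(`E` and `J·E` stable under pullback, `M·J ⊆ Mono`); (ii) every morphism of `M` and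
every morphism of `J` is a monomorphism, and `E`, `J`, `M` are each stable under
pullback. -/
theorem statement11 {C : Type u} [Category.{v} C] [HasFiniteLimits C]
    [CartesianMonoidalCategory C] [MonoidalClosed C] (Ω : C) (tr : ⊤_ C ⟶ Ω) (hΩ : DFS.IsClassifier Ω tr)
    (E J M : MorphismProperty C) (h : DFS.IsDFS E J M) :
    DFS.IsCartesian E J M ↔
      ((∀ ⦃A B : C⦄ (f : A ⟶ B), M f → Mono f) ∧
       (∀ ⦃A B : C⦄ (f : A ⟶ B), J f → Mono f) ∧
       DFS.StableUnderPB E ∧ DFS.StableUnderPB J ∧ DFS.StableUnderPB M) := by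
  constructor
  · rintro ⟨sE, sJE, hMJmono⟩
    have hM : ∀ ⦃A B : C⦄ (f : A ⟶ B), M f → Mono f := fun {A B} f hf =>
      hMJmono f ⟨A, 𝟙 A, f, (DFSAux.ids h A).2.1, hf, Category.id_comp f⟩
    have hJ : ∀ ⦃A B : C⦄ (f : A ⟶ B), J f → Mono f := fun {A B} f hf =>
      hMJmono f ⟨B, f, 𝟙 B, hf, (DFSAux.ids h B).2.2, Category.comp_id f⟩
    refine ⟨hM, hJ, sE, ?_, ?_⟩
    · -- J is stable under pullback
      intro A B A' B' f g f' hh pb hf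
      have hJE' : DFS.Comp J E f' :=
        sJE f g f' hh pb ⟨A, 𝟙 A, f, (DFSAux.ids h A).1, hf, Category.id_comp f⟩
      have hMJ' : DFS.Comp M J f' := by
        refine DFSAux.mem_MJ_of_orth h ?_
        intro P Q e he
        refine DFSAux.orth_pb pb ?_
        have := DFSAux.orth_left h he hf (DFSAux.ids h B).2.2
        rwa [Category.comp_id] at this
      obtain ⟨Z1, e1, j2, he1, hj2, hfac1⟩ := hJE'
      obtain ⟨Z2, j1, m1, hj1, hm1, hfac2⟩ := hMJ'
      obtain ⟨st, ⟨_, _, h3⟩, _⟩ := h.lift e1 j2 j1 m1 (𝟙 A') (𝟙 B') he1 hj2 hj1 hm1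
        (by rw [Category.comp_id, Category.id_comp, hfac1, hfac2])
      haveI hmono : Mono m1 := hM m1 hm1
      have hmt : m1 ≫ st.2 = 𝟙 Z2 := by
        have : (m1 ≫ st.2) ≫ m1 = 𝟙 Z2 ≫ m1 := by
          rw [Category.assoc, h3, Category.comp_id, Category.id_comp]
        exact (cancel_mono m1).1 this
      have hiso : IsIso m1 := ⟨st.2, hmt, h3⟩
      have := h.comp_iso_J (𝟙 A') j1 m1 inferInstance hiso hj1
      rw [Category.id_comp, hfac2] at this
      exact this
    · -- M is stable under pullback
      intro A B A' B' f g f' hh pb hf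
      refine DFSAux.mem_M_of_orth h ?_
      intro P Q R e j he hj
      exact DFSAux.orth_pb pb (DFSAux.orth_right h he hj hf)
  · rintro ⟨hM, hJ, sE, sJ, sM⟩
    refine ⟨sE, ?_, ?_⟩
    · -- J·E is stable under pullback
      intro A B A' B' f g f' hh pb hf
      obtain ⟨Z, e, jj, he, hjj, hfac⟩ := hf
      rw [← hfac] at pb
      have t : IsPullback (pullback.fst jj g) (pullback.snd jj g) jj g :=
        IsPullback.of_hasPullback jj g
      have hJsnd : J (pullback.snd jj g) := sJ jj g _ _ t hjj
      have wcond : (hh ≫ e) ≫ jj = f' ≫ g := by rw [Category.assoc]; exact pb.w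
      have sq : IsPullback hh (t.lift (hh ≫ e) f' wcond) e (pullback.fst jj g) := by
        refine IsPullback.of_bot ?_ (t.lift_fst _ _ _).symm t
        rw [t.lift_snd]
        exact pb
      exact ⟨pullback jj g, t.lift (hh ≫ e) f' wcond, pullback.snd jj g,
        sE e (pullback.fst jj g) _ hh sq he, hJsnd, t.lift_snd _ _ _⟩
    · -- M·J consists of monos
      intro A B f hf
      obtain ⟨Z, jj, m, hjj, hm, hfac⟩ := hf
      rw [← hfac]
      haveI := hJ jj hjj
      haveI := hM m hm
      exact mono_comp _ _
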